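/- arXiv:1002.0231 — 2 statements merged into one kernel-verified Lean document; each statement's English description precedes it below -/
import Mathlib

section
/- The K-matrices of the first type satisfy unitarity: for all B₁,B₂,D₁,D₂,E₁,E₂,E₃ ∈ ℂ and every z ∈ ℂ with z ≠ 0, there exists a scalar ρ ∈ ℂ such that K_I(z; B₁,B₂,D₁,D₂,E₁,E₂,E₃) · K_I(z⁻¹; B₁,B₂,D₁,D₂,E₁,E₂,E₃) = ρ · Id₃. -/
open Matrix Kronecker

set_option maxHeartbeats 2000000

/-- The matrix `T` with `T_{ij} = 1` iff `i + j = 2`. -/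
noncomputable def Tmat : Matrix (Fin 3) (Fin 3) ℂ :=
  fun i j => if (i : ℕ) + (j : ℕ) = 2 then 1 else 0

noncomputable def KI0 (z D₁ D₂ E₁ : ℂ) : Matrix (Fin 3) (Fin 3) ℂ :=
  E₁ ^ 2 • !![D₂ ^ 2 * z ^ 2, D₁ * D₂ * (z ^ 4 - 1), D₁ ^ 2 * z ^ 2 * (z ^ 4 - 1);
      0, D₂ ^ 2 * z ^ 2, D₁ * D₂ * (z ^ 4 - 1);
      0, 0, D₂ ^ 2 * z ^ 2]

noncomputable def KI1 (z B₁ B₂ D₁ E₂ : ℂ) : Matrix (Fin 3) (Fin 3) ℂ :=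
  (-(D₁ * E₂ * z ^ 2)) • !![B₁, 0, 0; 0, B₁, B₂ * (1 - z ^ 4); 0, 0, B₁ * z ^ 4]

/-- The first family of `K`-matrices. -/
noncomputable def KI (z B₁ B₂ D₁ D₂ E₁ E₂ E₃ : ℂ) : Matrix (Fin 3) (Fin 3) ℂ :=
  KI0 z D₁ D₂ E₁ - z ^ 6 • (Tmat * KI0 z⁻¹ D₂ D₁ E₃ * Tmat)
    + KI1 z B₁ B₂ D₁ E₂ - z ^ 6 • (Tmat * KI1 z⁻¹ B₂ B₁ D₂ E₂ * Tmat)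


lemma Tmat_conj (M : Matrix (Fin 3) (Fin 3) ℂ) :
    Tmat * M * Tmat = !![M 2 2, M 2 1, M 2 0; M 1 2, M 1 1, M 1 0; M 0 2, M 0 1, M 0 0] := by
  ext i j
  fin_cases i <;> fin_cases j <;>
    simp [Tmat, Matrix.mul_apply, Fin.sum_univ_succ]

lemma KI_eq (B₁ B₂ D₁ D₂ E₁ E₂ E₃ : ℂ) (z : ℂ) (hz : z ≠ 0) :
    KI z B₁ B₂ D₁ D₂ E₁ E₂ E₃ =
    !![D₂^2*E₁^2*z^2 - D₁^2*E₃^2*z^4 + B₂*D₂*E₂ - B₁*D₁*E₂*z^2,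
       -(D₁*D₂*E₁^2) + D₁*D₂*E₁^2*z^4,
       -(D₁^2*E₁^2*z^2) + D₁^2*E₁^2*z^6;
       -(D₁*D₂*E₃^2*z^2) + D₁*D₂*E₃^2*z^6 - B₁*D₂*E₂ + B₁*D₂*E₂*z^4,
       D₂^2*E₁^2*z^2 - D₁^2*E₃^2*z^4 + B₂*D₂*E₂*z^4 - B₁*D₁*E₂*z^2,
       -(D₁*D₂*E₁^2) + D₁*D₂*E₁^2*z^4 - B₂*D₁*E₂*z^2 + B₂*D₁*E₂*z^6;
       -(D₂^2*E₃^2) + D₂^2*E₃^2*z^4,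
       -(D₁*D₂*E₃^2*z^2) + D₁*D₂*E₃^2*z^6,
       D₂^2*E₁^2*z^2 - D₁^2*E₃^2*z^4 + B₂*D₂*E₂*z^4 - B₁*D₁*E₂*z^6] := by
  rw [KI, Tmat_conj, Tmat_conj]
  ext i j
  fin_cases i <;> fin_cases j <;>
    simp [KI0, KI1, Matrix.vecHead, Matrix.vecTail] <;> (try field_simp) <;> ring

lemma KI_inv_eq (B₁ B₂ D₁ D₂ E₁ E₂ E₃ : ℂ) (z : ℂ) (hz : z ≠ 0) :
    KI z⁻¹ B₁ B₂ D₁ D₂ E₁ E₂ E₃ = (z^6)⁻¹ •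
    !![D₂^2*E₁^2*z^4 - D₁^2*E₃^2*z^2 + B₂*D₂*E₂*z^6 - B₁*D₁*E₂*z^4,
       D₁*D₂*E₁^2*z^2 - D₁*D₂*E₁^2*z^6,
       D₁^2*E₁^2 - D₁^2*E₁^2*z^4;
       D₁*D₂*E₃^2 - D₁*D₂*E₃^2*z^4 + B₁*D₂*E₂*z^2 - B₁*D₂*E₂*z^6,
       D₂^2*E₁^2*z^4 - D₁^2*E₃^2*z^2 + B₂*D₂*E₂*z^2 - B₁*D₁*E₂*z^4,
       D₁*D₂*E₁^2*z^2 - D₁*D₂*E₁^2*z^6 + B₂*D₁*E₂ - B₂*D₁*E₂*z^4;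
       D₂^2*E₃^2*z^2 - D₂^2*E₃^2*z^6,
       D₁*D₂*E₃^2 - D₁*D₂*E₃^2*z^4,
       D₂^2*E₁^2*z^4 - D₁^2*E₃^2*z^2 + B₂*D₂*E₂*z^2 - B₁*D₁*E₂] := by
  rw [KI_eq _ _ _ _ _ _ _ _ (inv_ne_zero hz)]
  ext i j
  fin_cases i <;> fin_cases j <;> simp [Matrix.smul_apply]
  all_goals field_simp
  all_goals try rw [div_eq_iff (by simp [hz])]
  all_goals ring

/-- The `K`-matrices of the first family satisfy unitarity. -/
theorem KI_unitarity (B₁ B₂ D₁ D₂ E₁ E₂ E₃ : ℂ) (z : ℂ) (hz : z ≠ 0) :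
    ∃ ρ : ℂ, KI z B₁ B₂ D₁ D₂ E₁ E₂ E₃ * KI z⁻¹ B₁ B₂ D₁ D₂ E₁ E₂ E₃ =
      ρ • (1 : Matrix (Fin 3) (Fin 3) ℂ) := by
  refine ⟨(z^6)⁻¹ * (D₂^4*E₁^4*z^6 - D₁^2*D₂^2*E₁^2*E₃^2 - D₁^2*D₂^2*E₁^2*E₃^2*z^12
    + D₁^4*E₃^4*z^6 + B₂*D₂^3*E₁^2*E₂*z^4 + B₂*D₂^3*E₁^2*E₂*z^8
    - B₂*D₁^2*D₂*E₂*E₃^2*z^2 - B₂*D₁^2*D₂*E₂*E₃^2*z^10 + B₂^2*D₂^2*E₂^2*z^6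
    - B₁*D₁*D₂^2*E₁^2*E₂*z^2 - B₁*D₁*D₂^2*E₁^2*E₂*z^10
    + B₁*D₁^3*E₂*E₃^2*z^4 + B₁*D₁^3*E₂*E₃^2*z^8
    - B₁*B₂*D₁*D₂*E₂^2*z^4 - B₁*B₂*D₁*D₂*E₂^2*z^8 + B₁^2*D₁^2*E₂^2*z^6), ?_⟩
  rw [KI_eq _ _ _ _ _ _ _ _ hz, KI_inv_eq _ _ _ _ _ _ _ _ hz,
    Matrix.mul_smul, mul_smul]
  congr 1
  ext i j
  fin_cases i <;> fin_cases j <;>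
    simp [Matrix.mul_apply, Fin.sum_univ_succ, Matrix.one_apply] <;> ring
end

section
/- Four entries of the reflection-equation difference vanish identically for arbitrary matrices: for all q, z₁, z₂ ∈ ℂ with q ≠ 0, q² ≠ 1, z₁ ≠ 0, z₂ ≠ 0, z₁² ≠ z₂², z₁²z₂² ≠ 1, and for all 3×3 complex matrices A and B, the 9×9 matrix D := R(z₁/z₂,q) A₁ R₂₁(z₁z₂) B₂ − B₂ R(z₁z₂,q) A₁ R₂₁(z₁/z₂) has vanishing entries in row (0,0) column (1,1), row (0,0) column (2,2), row (2,2) column (1,1), and row (2,2) column (0,0). -/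
open Matrix Kronecker

/-- The `N = 3` Cremmer-Gervais `R`-matrix, rows indexed by pairs `(i,j)`,
columns by pairs `(k,l)`. -/
noncomputable def Rcg (z q : ℂ) : Matrix (Fin 3 × Fin 3) (Fin 3 × Fin 3) ℂ :=
  fun p r =>
    if p.1 = p.2 ∧ p.2 = r.1 ∧ r.1 = r.2 then
      (q * z⁻¹ - q⁻¹ * z) / ((q - q⁻¹) * (z - z⁻¹))
    else if p.1 = r.1 ∧ p.2 = r.2 ∧ p.1 ≠ p.2 then
      (if (r.2 : ℕ) < (r.1 : ℕ) then -q else -q⁻¹) / (q - q⁻¹)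
    else if r.2 = p.1 ∧ r.1 = p.2 ∧ p.1 ≠ p.2 then
      (if (r.1 : ℕ) < (r.2 : ℕ) then z else z⁻¹) / (z - z⁻¹)
    else if min (r.1 : ℕ) (r.2 : ℕ) < (p.1 : ℕ) ∧ (p.1 : ℕ) < max (r.1 : ℕ) (r.2 : ℕ)
        ∧ (p.1 : ℕ) + (p.2 : ℕ) = (r.1 : ℕ) + (r.2 : ℕ) then
      (if (r.1 : ℕ) < (r.2 : ℕ) then 1 else -1)
    else 0

/-- The flip matrix `P` with entries `P^{ij}_{kl} = δ_{il} δ_{jk}`. -/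
noncomputable def Pflip : Matrix (Fin 3 × Fin 3) (Fin 3 × Fin 3) ℂ :=
  fun p r => if p.1 = r.2 ∧ p.2 = r.1 then 1 else 0

/-- `R₂₁(z) = P R(z,q) P`. -/
noncomputable def R21 (z q : ℂ) : Matrix (Fin 3 × Fin 3) (Fin 3 × Fin 3) ℂ :=
  Pflip * Rcg z q * Pflip

/-- `M₁ = M ⊗ Id₃`. -/
noncomputable def Mleft (M : Matrix (Fin 3) (Fin 3) ℂ) :
    Matrix (Fin 3 × Fin 3) (Fin 3 × Fin 3) ℂ :=
  M ⊗ₖ (1 : Matrix (Fin 3) (Fin 3) ℂ)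

/-- `M₂ = Id₃ ⊗ M`. -/
noncomputable def Mright (M : Matrix (Fin 3) (Fin 3) ℂ) :
    Matrix (Fin 3 × Fin 3) (Fin 3 × Fin 3) ℂ :=
  (1 : Matrix (Fin 3) (Fin 3) ℂ) ⊗ₖ M

lemma Pflip_mul (M : Matrix (Fin 3 × Fin 3) (Fin 3 × Fin 3) ℂ) (p r : Fin 3 × Fin 3) :
    (Pflip * M) p r = M (p.2, p.1) r := by
  rw [Matrix.mul_apply, Finset.sum_eq_single (p.2, p.1)]
  · simp [Pflip]
  · intro b _ hb
    have : Pflip p b = 0 := by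
      simp only [Pflip, ite_eq_right_iff, one_ne_zero, imp_false, not_and]
      intro h1 h2
      exact hb (by rcases b with ⟨b1,b2⟩; simp_all [Prod.ext_iff])
    simp [this]
  · simp

lemma mul_Pflip (M : Matrix (Fin 3 × Fin 3) (Fin 3 × Fin 3) ℂ) (p r : Fin 3 × Fin 3) :
    (M * Pflip) p r = M p (r.2, r.1) := by
  rw [Matrix.mul_apply, Finset.sum_eq_single (r.2, r.1)]
  · simp [Pflip]
  · intro b _ hb
    have : Pflip b r = 0 := by
      simp only [Pflip, ite_eq_right_iff, one_ne_zero, imp_false, not_and]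
      intro h1 h2
      exact hb (by rcases b with ⟨b1,b2⟩; simp_all [Prod.ext_iff])
    simp [this]
  · simp

lemma R21_apply (z q : ℂ) (p r : Fin 3 × Fin 3) :
    R21 z q p r = Rcg z q (p.2, p.1) (r.2, r.1) := by
  rw [R21, mul_Pflip, Pflip_mul]

lemma Mleft_apply (M : Matrix (Fin 3) (Fin 3) ℂ) (p r : Fin 3 × Fin 3) :
    Mleft M p r = if p.2 = r.2 then M p.1 r.1 else 0 := by
  simp [Mleft, Matrix.one_apply, mul_ite]

lemma Mright_apply (M : Matrix (Fin 3) (Fin 3) ℂ) (p r : Fin 3 × Fin 3) :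
    Mright M p r = if p.1 = r.1 then M p.2 r.2 else 0 := by
  simp [Mright, Matrix.one_apply, ite_mul]

lemma Rcg_row00 (z q : ℂ) (a : Fin 3 × Fin 3) :
    Rcg z q (0, 0) a =
      if a = (0, 0) then (q * z⁻¹ - q⁻¹ * z) / ((q - q⁻¹) * (z - z⁻¹)) else 0 := by
  rcases a with ⟨a1, a2⟩
  fin_cases a1 <;> fin_cases a2 <;> simp [Rcg, Prod.ext_iff]

lemma Rcg_row22 (z q : ℂ) (a : Fin 3 × Fin 3) :
    Rcg z q (2, 2) a =
      if a = (2, 2) then (q * z⁻¹ - q⁻¹ * z) / ((q - q⁻¹) * (z - z⁻¹)) else 0 := by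
  rcases a with ⟨a1, a2⟩
  fin_cases a1 <;> fin_cases a2 <;> simp [Rcg, Prod.ext_iff]

lemma Rcg_col00 (z q : ℂ) (a : Fin 3 × Fin 3) :
    Rcg z q a (0, 0) =
      if a = (0, 0) then (q * z⁻¹ - q⁻¹ * z) / ((q - q⁻¹) * (z - z⁻¹)) else 0 := by
  rcases a with ⟨a1, a2⟩
  fin_cases a1 <;> fin_cases a2 <;> simp [Rcg, Prod.ext_iff]

lemma Rcg_col11 (z q : ℂ) (a : Fin 3 × Fin 3) :
    Rcg z q a (1, 1) =
      if a = (1, 1) then (q * z⁻¹ - q⁻¹ * z) / ((q - q⁻¹) * (z - z⁻¹)) else 0 := by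
  rcases a with ⟨a1, a2⟩
  fin_cases a1 <;> fin_cases a2 <;> simp [Rcg, Prod.ext_iff]

lemma Rcg_col22 (z q : ℂ) (a : Fin 3 × Fin 3) :
    Rcg z q a (2, 2) =
      if a = (2, 2) then (q * z⁻¹ - q⁻¹ * z) / ((q - q⁻¹) * (z - z⁻¹)) else 0 := by
  rcases a with ⟨a1, a2⟩
  fin_cases a1 <;> fin_cases a2 <;> simp [Rcg, Prod.ext_iff]

noncomputable def dval (z q : ℂ) : ℂ := (q * z⁻¹ - q⁻¹ * z) / ((q - q⁻¹) * (z - z⁻¹))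

lemma Rcg_mul_row00 (z q : ℂ) (X : Matrix (Fin 3 × Fin 3) (Fin 3 × Fin 3) ℂ)
    (r : Fin 3 × Fin 3) : (Rcg z q * X) (0, 0) r = dval z q * X (0, 0) r := by
  rw [Matrix.mul_apply, Finset.sum_eq_single ((0, 0) : Fin 3 × Fin 3)]
  · rw [Rcg_row00]; simp [dval]
  · intro b _ hb; rw [Rcg_row00, if_neg hb, zero_mul]
  · simp

lemma Rcg_mul_row22 (z q : ℂ) (X : Matrix (Fin 3 × Fin 3) (Fin 3 × Fin 3) ℂ)
    (r : Fin 3 × Fin 3) : (Rcg z q * X) (2, 2) r = dval z q * X (2, 2) r := by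
  rw [Matrix.mul_apply, Finset.sum_eq_single ((2, 2) : Fin 3 × Fin 3)]
  · rw [Rcg_row22]; simp [dval]
  · intro b _ hb; rw [Rcg_row22, if_neg hb, zero_mul]
  · simp

lemma mul_R21_col00 (z q : ℂ) (X : Matrix (Fin 3 × Fin 3) (Fin 3 × Fin 3) ℂ)
    (p : Fin 3 × Fin 3) : (X * R21 z q) p (0, 0) = X p (0, 0) * dval z q := by
  rw [Matrix.mul_apply, Finset.sum_eq_single ((0, 0) : Fin 3 × Fin 3)]
  · rw [R21_apply, Rcg_col00]; simp [dval]
  · intro b _ hb; rw [R21_apply, Rcg_col00]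
    have h2 : ((b.2, b.1) : Fin 3 × Fin 3) ≠ (0, 0) := by
      rcases b with ⟨b1, b2⟩; simp_all [Prod.ext_iff]; tauto
    rw [if_neg h2, mul_zero]
  · simp

lemma mul_R21_col11 (z q : ℂ) (X : Matrix (Fin 3 × Fin 3) (Fin 3 × Fin 3) ℂ)
    (p : Fin 3 × Fin 3) : (X * R21 z q) p (1, 1) = X p (1, 1) * dval z q := by
  rw [Matrix.mul_apply, Finset.sum_eq_single ((1, 1) : Fin 3 × Fin 3)]
  · rw [R21_apply, Rcg_col11]; simp [dval]
  · intro b _ hb; rw [R21_apply, Rcg_col11]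
    have h2 : ((b.2, b.1) : Fin 3 × Fin 3) ≠ (1, 1) := by
      rcases b with ⟨b1, b2⟩; simp_all [Prod.ext_iff]; tauto
    rw [if_neg h2, mul_zero]
  · simp

lemma mul_R21_col22 (z q : ℂ) (X : Matrix (Fin 3 × Fin 3) (Fin 3 × Fin 3) ℂ)
    (p : Fin 3 × Fin 3) : (X * R21 z q) p (2, 2) = X p (2, 2) * dval z q := by
  rw [Matrix.mul_apply, Finset.sum_eq_single ((2, 2) : Fin 3 × Fin 3)]
  · rw [R21_apply, Rcg_col22]; simp [dval]
  · intro b _ hb; rw [R21_apply, Rcg_col22]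
    have h2 : ((b.2, b.1) : Fin 3 × Fin 3) ≠ (2, 2) := by
      rcases b with ⟨b1, b2⟩; simp_all [Prod.ext_iff]; tauto
    rw [if_neg h2, mul_zero]
  · simp


set_option maxHeartbeats 1600000 in
/-- Four entries of the reflection-equation difference vanish identically. -/
theorem reflection_difference_entries_vanish (q z₁ z₂ : ℂ) (hq : q ≠ 0)
    (hq2 : q ^ 2 ≠ 1) (hz₁ : z₁ ≠ 0) (hz₂ : z₂ ≠ 0) (hzz : z₁ ^ 2 ≠ z₂ ^ 2)
    (hz₁₂ : z₁ ^ 2 * z₂ ^ 2 ≠ 1) (A B : Matrix (Fin 3) (Fin 3) ℂ) :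
    let D := Rcg (z₁ / z₂) q * Mleft A * R21 (z₁ * z₂) q * Mright B
      - Mright B * Rcg (z₁ * z₂) q * Mleft A * R21 (z₁ / z₂) q
    D (0, 0) (1, 1) = 0 ∧ D (0, 0) (2, 2) = 0 ∧
      D (2, 2) (1, 1) = 0 ∧ D (2, 2) (0, 0) = 0 := by
  have hqq : q - q⁻¹ ≠ 0 := by
    intro h; apply hq2
    have := sub_eq_zero.mp h
    field_simp at this; linear_combination this
  have huu : z₁ / z₂ - (z₁ / z₂)⁻¹ ≠ 0 := by
    intro h; apply hzz
    have := sub_eq_zero.mp h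
    field_simp at this ⊢; linear_combination this
  have hvv : z₁ * z₂ - (z₁ * z₂)⁻¹ ≠ 0 := by
    intro h; apply hz₁₂
    have := sub_eq_zero.mp h
    field_simp at this ⊢; linear_combination this
  have hassoc : Rcg (z₁ / z₂) q * Mleft A * R21 (z₁ * z₂) q * Mright B
      = Rcg (z₁ / z₂) q * (Mleft A * R21 (z₁ * z₂) q * Mright B) := by
    rw [mul_assoc, mul_assoc, mul_assoc]
  refine ⟨?_, ?_, ?_, ?_⟩
  · rw [Matrix.sub_apply, hassoc, Rcg_mul_row00, mul_R21_col11]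
    simp only [Matrix.mul_apply, Mleft_apply, Mright_apply, R21_apply,
      Fintype.sum_prod_type, Fin.sum_univ_three, ite_mul, mul_ite,
      zero_mul, mul_zero, zero_add, add_zero]
    norm_num
    simp (config := { decide := true }) only [Rcg, Fin.isValue, ite_true, ite_false]
    norm_num [dval]
    try field_simp
    try ring
  · rw [Matrix.sub_apply, hassoc, Rcg_mul_row00, mul_R21_col22]
    simp only [Matrix.mul_apply, Mleft_apply, Mright_apply, R21_apply,
      Fintype.sum_prod_type, Fin.sum_univ_three, ite_mul, mul_ite,
      zero_mul, mul_zero, zero_add, add_zero]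
    norm_num
    simp (config := { decide := true }) only [Rcg, Fin.isValue, ite_true, ite_false]
    norm_num [dval]
    try field_simp
    try ring
  · rw [Matrix.sub_apply, hassoc, Rcg_mul_row22, mul_R21_col11]
    simp only [Matrix.mul_apply, Mleft_apply, Mright_apply, R21_apply,
      Fintype.sum_prod_type, Fin.sum_univ_three, ite_mul, mul_ite,
      zero_mul, mul_zero, zero_add, add_zero]
    norm_num
    simp (config := { decide := true }) only [Rcg, Fin.isValue, ite_true, ite_false]
    norm_num [dval]
    try field_simp
    try ring
  · rw [Matrix.sub_apply, hassoc, Rcg_mul_row22, mul_R21_col00]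
    simp only [Matrix.mul_apply, Mleft_apply, Mright_apply, R21_apply,
      Fintype.sum_prod_type, Fin.sum_univ_three, ite_mul, mul_ite,
      zero_mul, mul_zero, zero_add, add_zero]
    norm_num
    simp (config := { decide := true }) only [Rcg, Fin.isValue, ite_true, ite_false]
    norm_num [dval]
    try field_simp
    try ring
end
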